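/- Let λ be a frequency with L(λ) := limsup_{n→∞} (log n)/λ_n < ∞, let k ≥ 1 be an integer, and let σ > (k−1)·L(λ)/2. Then sup_{μ>0} e^{−2μσ}·card{(n₁,…,n_k) ∈ ℕ^k : λ_{n₁} + ⋯ + λ_{n_k} = μ} < ∞; consequently (by the coefficient estimate for T_σ) for every square-summable sequence (a_n) of complex numbers, the family b_μ := e^{−μσ}·∑_{(n₁,…,n_k): λ_{n₁}+⋯+λ_{n_k}=μ} a_{n₁}⋯a_{n_k}, indexed by μ ∈ λ^{*k}, is square-summable, i.e. T_σ maps H_2(λ) into H_{2k}(λ). -/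

import Mathlib

open Filter ENNReal

lemma tsum_pi_prod (f : ℕ → ℝ≥0∞) : ∀ m : ℕ,
    ∑' v : Fin m → ℕ, ∏ i, f (v i) = (∑' n, f n) ^ m := by
  intro m
  induction m with
  | zero =>
      rw [tsum_eq_single (fun i => i.elim0) (fun b hb => absurd (Subsingleton.elim b _) hb)]
      simp
  | succ m ih =>
      rw [← (Fin.consEquiv (fun _ : Fin (m+1) => ℕ)).tsum_eq]
      simp only [Fin.consEquiv_apply]
      rw [ENNReal.tsum_prod']
      simp only [Fin.prod_univ_succ, Fin.cons_zero, Fin.cons_succ]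
      rw [pow_succ]
      calc ∑' n, ∑' w : Fin m → ℕ, f n * ∏ i, f (w i)
          = ∑' n, f n * ∑' w : Fin m → ℕ, ∏ i, f (w i) := by
            congr 1; funext n; exact ENNReal.tsum_mul_left
        _ = (∑' w : Fin m → ℕ, ∏ i, f (w i)) * ∑' n, f n := by
            rw [ENNReal.tsum_mul_right]; ring
        _ = (∑' n, f n) ^ m * ∑' n, f n := by rw [ih]

/-- If `L(λ) < ∞`, `k ≥ 1` and `σ > (k−1)L(λ)/2`, then
`sup_{μ>0} e^{−2μσ}·card{(n₁,…,n_k) : λ_{n₁}+⋯+λ_{n_k} = μ} < ∞`; consequently, for every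
square-summable `(a_n)`, the family `b_μ = e^{−μσ} ∑_{λ_{n₁}+⋯+λ_{n_k}=μ} a_{n₁}⋯a_{n_k}`,
`μ ∈ λ^{*k}`, is square-summable, i.e. `T_σ` maps `H_2(λ)` into `H_{2k}(λ)`. -/
theorem translation_H2_H2k_of_L_finite (l : ℕ → ℝ) (hmono : StrictMono l)
    (hnonneg : ∀ n, 0 ≤ l n) (htend : Tendsto l atTop atTop)
    (L : ℝ≥0∞)
    (hL : L = Filter.limsup (fun n : ℕ => ENNReal.ofReal (Real.log (n + 1) / l n)) atTop)
    (hLfin : L ≠ ⊤)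
    (k : ℕ) (hk : 1 ≤ k) (σ : ℝ) (hσ : ((k : ℝ) - 1) * L.toReal / 2 < σ) :
    (∃ C : ℝ, ∀ μ > (0 : ℝ),
      Real.exp (-2 * μ * σ) *
        (Set.ncard {v : Fin k → ℕ | ∑ i, l (v i) = μ} : ℝ) ≤ C) ∧
    ∀ a : ℕ → ℂ, Summable (fun n => ‖a n‖ ^ 2) →
      ∑' μ : {x : ℝ | ∃ v : Fin k → ℕ, ∑ i, l (v i) = x},
          ((‖(Real.exp (-(μ : ℝ) * σ) : ℂ) *
              ∑ᶠ v ∈ {v : Fin k → ℕ | ∑ i, l (v i) = (μ : ℝ)}, ∏ i, a (v i)‖₊ : ℝ≥0∞) ^ 2)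
        < ⊤ := by
  classical
  obtain ⟨m, rfl⟩ : ∃ m, k = m + 1 := ⟨k - 1, (Nat.succ_pred_eq_of_pos hk).symm⟩
  have hσ' : (m : ℝ) * L.toReal / 2 < σ := by push_cast at hσ; linarith
  have hσ0 : 0 < σ := lt_of_le_of_lt (by positivity) hσ'
  -- choose α
  obtain ⟨α, hα_pos, hαL, hαm⟩ : ∃ α : ℝ, 0 < α ∧ L < ENNReal.ofReal α ∧ (m : ℝ) * α ≤ 2 * σ := by
    rcases Nat.eq_zero_or_pos m with hm | hm
    · refine ⟨L.toReal + 1, by positivity, ?_, by simp [hm]; positivity⟩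
      rw [ENNReal.lt_ofReal_iff_toReal_lt hLfin]; linarith
    · have hm' : (0 : ℝ) < m := by exact_mod_cast hm
      refine ⟨2 * σ / m, by positivity, ?_, by rw [mul_div_cancel₀]; positivity⟩
      rw [ENNReal.lt_ofReal_iff_toReal_lt hLfin, lt_div_iff₀ hm']
      nlinarith
  -- eventual bound
  have hev : ∀ᶠ n : ℕ in atTop,
      ENNReal.ofReal (Real.log (n + 1) / l n) < ENNReal.ofReal α :=
    Filter.eventually_lt_of_limsup_lt (hL ▸ hαL)
  obtain ⟨n₀, hn₀⟩ := eventually_atTop.mp hev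
  set n₁ : ℕ := max n₀ 1 with hn₁def
  have hbig : ∀ μ : ℝ, 0 ≤ μ → ∀ n : ℕ, n₁ ≤ n → l n ≤ μ → (n : ℝ) + 1 ≤ Real.exp (α * μ) := by
    intro μ hμ n hn hlμ
    have h1 : 1 ≤ n := le_trans (le_max_right _ _) hn
    have hln : 0 < l n := lt_of_le_of_lt (hnonneg 0) (hmono (by omega))
    have h2 := hn₀ n (le_trans (le_max_left _ _) hn)
    rw [ENNReal.ofReal_lt_ofReal_iff hα_pos] at h2
    rw [div_lt_iff₀ hln] at h2
    have h4 : Real.log ((n : ℝ) + 1) ≤ α * μ := le_trans h2.le (by nlinarith)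
    calc (n : ℝ) + 1 = Real.exp (Real.log ((n : ℝ) + 1)) := (Real.exp_log (by positivity)).symm
      _ ≤ Real.exp (α * μ) := Real.exp_le_exp.mpr h4
  -- finiteness of level sets of l
  have hR : ∀ μ : ℝ, {n : ℕ | l n ≤ μ}.Finite := by
    intro μ
    obtain ⟨N, hN⟩ := eventually_atTop.mp (htend.eventually (eventually_gt_atTop μ))
    refine Set.Finite.subset (Set.finite_Iio N) fun n hn => ?_
    by_contra h
    exact absurd hn.out (not_le.mpr (hN n (not_lt.mp h)))
  have hRcard : ∀ μ : ℝ, 0 ≤ μ → (((hR μ).toFinset.card : ℝ)) ≤ ((n₁ : ℝ) + 2) * Real.exp (α * μ) := by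
    intro μ hμ
    have hsub : (hR μ).toFinset ⊆ Finset.range (max n₁ ⌈Real.exp (α * μ)⌉₊) := by
      intro n hn
      rw [Set.Finite.mem_toFinset] at hn
      rw [Finset.mem_range]
      rcases lt_or_ge n n₁ with h | h
      · exact lt_of_lt_of_le h (le_max_left _ _)
      · have := hbig μ hμ n h hn
        exact lt_of_lt_of_le (Nat.lt_ceil.mpr (by linarith)) (le_max_right _ _)
    have h1 : (hR μ).toFinset.card ≤ max n₁ ⌈Real.exp (α * μ)⌉₊ := by
      simpa using Finset.card_le_card hsub
    have h2 : ((max n₁ ⌈Real.exp (α * μ)⌉₊ : ℕ) : ℝ) ≤ (n₁ : ℝ) + (⌈Real.exp (α * μ)⌉₊ : ℝ) := by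
      exact_mod_cast Nat.cast_le.mpr (max_le (Nat.le_add_right _ _) (Nat.le_add_left _ _))
    have h3 : (⌈Real.exp (α * μ)⌉₊ : ℝ) < Real.exp (α * μ) + 1 :=
      Nat.ceil_lt_add_one (Real.exp_pos _).le
    have h4 : (1 : ℝ) ≤ Real.exp (α * μ) := Real.one_le_exp (by positivity)
    have h5 : ((hR μ).toFinset.card : ℝ) ≤ ((max n₁ ⌈Real.exp (α * μ)⌉₊ : ℕ) : ℝ) := by
      exact_mod_cast h1
    nlinarith
  -- finiteness of fibers
  have hfin : ∀ μ : ℝ, {v : Fin (m + 1) → ℕ | ∑ i, l (v i) = μ}.Finite := by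
    intro μ
    have hsub : {v : Fin (m + 1) → ℕ | ∑ i, l (v i) = μ} ⊆
        Set.pi Set.univ (fun _ : Fin (m + 1) => {n : ℕ | l n ≤ μ}) := by
      intro v hv i _
      have : l (v i) ≤ ∑ j, l (v j) :=
        Finset.single_le_sum (fun j _ => hnonneg (v j)) (Finset.mem_univ i)
      simpa [hv.out] using this
    exact Set.Finite.subset (Set.Finite.pi fun _ => hR μ) hsub
  -- cardinality bound via projection
  have hcard : ∀ μ : ℝ, (hfin μ).toFinset.card ≤ (hR μ).toFinset.card ^ m := by
    intro μ
    have hmaps : ∀ v ∈ (hfin μ).toFinset,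
        (v ∘ Fin.castSucc) ∈ Fintype.piFinset (fun _ : Fin m => (hR μ).toFinset) := by
      intro v hv
      rw [Set.Finite.mem_toFinset] at hv
      rw [Fintype.mem_piFinset]
      intro i
      rw [Set.Finite.mem_toFinset]
      have : l (v i.castSucc) ≤ ∑ j, l (v j) :=
        Finset.single_le_sum (fun j _ => hnonneg (v j)) (Finset.mem_univ _)
      simpa [hv.out] using this
    have hinj : ∀ v ∈ (hfin μ).toFinset, ∀ w ∈ (hfin μ).toFinset,
        v ∘ Fin.castSucc = w ∘ Fin.castSucc → v = w := by
      intro v hv w hw h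
      rw [Set.Finite.mem_toFinset] at hv hw
      have hvs := hv.out
      have hws := hw.out
      rw [Fin.sum_univ_castSucc] at hvs hws
      have hsum : ∑ i : Fin m, l (v i.castSucc) = ∑ i : Fin m, l (w i.castSucc) := by
        refine Finset.sum_congr rfl fun i _ => ?_
        rw [show v i.castSucc = w i.castSucc from congrFun h i]
      have hlast : l (v (Fin.last m)) = l (w (Fin.last m)) := by linarith
      funext i
      induction i using Fin.lastCases with
      | last => exact hmono.injective hlast
      | cast j => exact congrFun h j
    have := Finset.card_le_card_of_injOn (fun v => v ∘ Fin.castSucc) hmaps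
      (fun v hv w hw h => hinj v hv w hw h)
    simpa [Fintype.card_piFinset] using this
  -- key exponential bound
  set C : ℝ := ((n₁ : ℝ) + 2) ^ m with hCdef
  have hC0 : 0 < C := by positivity
  have key : ∀ μ : ℝ, 0 ≤ μ → ((hfin μ).toFinset.card : ℝ) ≤ C * Real.exp (2 * σ * μ) := by
    intro μ hμ
    have c1 : ((hfin μ).toFinset.card : ℝ) ≤ ((hR μ).toFinset.card : ℝ) ^ m := by
      exact_mod_cast hcard μ
    have c2 : ((hR μ).toFinset.card : ℝ) ^ m ≤ (((n₁ : ℝ) + 2) * Real.exp (α * μ)) ^ m :=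
      pow_le_pow_left₀ (Nat.cast_nonneg _) (hRcard μ hμ) m
    have c3 : (((n₁ : ℝ) + 2) * Real.exp (α * μ)) ^ m = C * Real.exp ((m : ℝ) * (α * μ)) := by
      rw [mul_pow, ← Real.exp_nat_mul]
    have c4 : Real.exp ((m : ℝ) * (α * μ)) ≤ Real.exp (2 * σ * μ) := by
      apply Real.exp_le_exp.mpr
      nlinarith
    calc ((hfin μ).toFinset.card : ℝ) ≤ (((n₁ : ℝ) + 2) * Real.exp (α * μ)) ^ m := le_trans c1 c2
      _ = C * Real.exp ((m : ℝ) * (α * μ)) := c3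
      _ ≤ C * Real.exp (2 * σ * μ) := by nlinarith [Real.exp_pos ((m : ℝ) * (α * μ))]
  have keyexp : ∀ μ : ℝ, 0 ≤ μ →
      Real.exp (-2 * μ * σ) * ((hfin μ).toFinset.card : ℝ) ≤ C := by
    intro μ hμ
    have e1 : Real.exp (-2 * μ * σ) * ((hfin μ).toFinset.card : ℝ) ≤
        Real.exp (-2 * μ * σ) * (C * Real.exp (2 * σ * μ)) := by
      exact mul_le_mul_of_nonneg_left (key μ hμ) (Real.exp_pos _).le
    have e2 : Real.exp (-2 * μ * σ) * (C * Real.exp (2 * σ * μ)) = C := by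
      rw [show C * Real.exp (2 * σ * μ) = Real.exp (2 * σ * μ) * C from mul_comm _ _,
        ← mul_assoc, ← Real.exp_add]
      have : -2 * μ * σ + 2 * σ * μ = 0 := by ring
      rw [this, Real.exp_zero, one_mul]
    linarith
  constructor
  · refine ⟨C, fun μ hμ => ?_⟩
    rw [Set.ncard_eq_toFinset_card _ (hfin μ)]
    exact keyexp μ hμ.le
  · intro a ha
    set g : (Fin (m + 1) → ℕ) → ℝ≥0∞ := fun v => ∏ i, ((‖a (v i)‖₊ : ℝ≥0∞)) ^ 2 with hg
    -- pointwise bound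
    have hterm : ∀ μ : {x : ℝ | ∃ v : Fin (m + 1) → ℕ, ∑ i, l (v i) = x},
        ((‖(Real.exp (-(μ : ℝ) * σ) : ℂ) *
            ∑ᶠ v ∈ {v : Fin (m + 1) → ℕ | ∑ i, l (v i) = (μ : ℝ)}, ∏ i, a (v i)‖₊ : ℝ≥0∞)) ^ 2
          ≤ ENNReal.ofReal C * ∑ v ∈ (hfin (μ : ℝ)).toFinset, g v := by
      intro μ
      obtain ⟨v₀, hv₀⟩ := μ.2
      have hμ0 : 0 ≤ (μ : ℝ) := hv₀ ▸ Finset.sum_nonneg fun i _ => hnonneg _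
      have hfs : ∑ᶠ v ∈ {v : Fin (m + 1) → ℕ | ∑ i, l (v i) = (μ : ℝ)}, ∏ i, a (v i) =
          ∑ v ∈ (hfin (μ : ℝ)).toFinset, ∏ i, a (v i) := by
        conv_lhs => rw [← (hfin (μ : ℝ)).coe_toFinset]
        rw [finsum_mem_coe_finset]
      set b : ℂ := (Real.exp (-(μ : ℝ) * σ) : ℂ) *
          ∑ᶠ v ∈ {v : Fin (m + 1) → ℕ | ∑ i, l (v i) = (μ : ℝ)}, ∏ i, a (v i) with hb
      -- real estimate
      have hnorm : ‖b‖ ≤ Real.exp (-(μ : ℝ) * σ) *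
          ∑ v ∈ (hfin (μ : ℝ)).toFinset, ∏ i, ‖a (v i)‖ := by
        rw [hb, hfs, norm_mul, Complex.norm_real, Real.norm_of_nonneg (Real.exp_pos _).le]
        refine mul_le_mul_of_nonneg_left ?_ (Real.exp_pos _).le
        refine le_trans (norm_sum_le _ _) (le_of_eq ?_)
        exact Finset.sum_congr rfl fun v _ => norm_prod _ _
      have hnormsq : ‖b‖ ^ 2 ≤ C * ∑ v ∈ (hfin (μ : ℝ)).toFinset, ∏ i, ‖a (v i)‖ ^ 2 := by
        have hS : (∑ v ∈ (hfin (μ : ℝ)).toFinset, ∏ i, ‖a (v i)‖) ^ 2 ≤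
            ((hfin (μ : ℝ)).toFinset.card : ℝ) *
              ∑ v ∈ (hfin (μ : ℝ)).toFinset, (∏ i, ‖a (v i)‖) ^ 2 :=
          sq_sum_le_card_mul_sum_sq
        have hprod : ∀ v : Fin (m + 1) → ℕ, (∏ i, ‖a (v i)‖) ^ 2 = ∏ i, ‖a (v i)‖ ^ 2 := by
          intro v; rw [← Finset.prod_pow]
        have hSnn : 0 ≤ ∑ v ∈ (hfin (μ : ℝ)).toFinset, (∏ i, ‖a (v i)‖) ^ 2 :=
          Finset.sum_nonneg fun v _ => sq_nonneg _
        have hb2 : ‖b‖ ^ 2 ≤ Real.exp (-(μ : ℝ) * σ) ^ 2 *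
            (∑ v ∈ (hfin (μ : ℝ)).toFinset, ∏ i, ‖a (v i)‖) ^ 2 := by
          rw [← mul_pow]
          exact pow_le_pow_left₀ (norm_nonneg _) hnorm 2
        have hexp2 : Real.exp (-(μ : ℝ) * σ) ^ 2 = Real.exp (-2 * (μ : ℝ) * σ) := by
          rw [← Real.exp_nat_mul]; ring_nf
        have hkey := keyexp (μ : ℝ) hμ0
        calc ‖b‖ ^ 2 ≤ Real.exp (-(μ : ℝ) * σ) ^ 2 *
              (∑ v ∈ (hfin (μ : ℝ)).toFinset, ∏ i, ‖a (v i)‖) ^ 2 := hb2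
          _ ≤ Real.exp (-(μ : ℝ) * σ) ^ 2 * (((hfin (μ : ℝ)).toFinset.card : ℝ) *
              ∑ v ∈ (hfin (μ : ℝ)).toFinset, (∏ i, ‖a (v i)‖) ^ 2) :=
            mul_le_mul_of_nonneg_left hS (sq_nonneg _)
          _ = (Real.exp (-2 * (μ : ℝ) * σ) * ((hfin (μ : ℝ)).toFinset.card : ℝ)) *
              ∑ v ∈ (hfin (μ : ℝ)).toFinset, (∏ i, ‖a (v i)‖) ^ 2 := by
            rw [hexp2]; ring
          _ ≤ C * ∑ v ∈ (hfin (μ : ℝ)).toFinset, (∏ i, ‖a (v i)‖) ^ 2 :=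
            mul_le_mul_of_nonneg_right hkey hSnn
          _ = C * ∑ v ∈ (hfin (μ : ℝ)).toFinset, ∏ i, ‖a (v i)‖ ^ 2 := by
            congr 1; exact Finset.sum_congr rfl fun v _ => hprod v
      -- pass to ℝ≥0∞
      calc ((‖b‖₊ : ℝ≥0∞)) ^ 2 = ENNReal.ofReal (‖b‖ ^ 2) := by
            rw [← enorm_eq_nnnorm, ← ofReal_norm, ← ENNReal.ofReal_pow (norm_nonneg _)]
        _ ≤ ENNReal.ofReal (C * ∑ v ∈ (hfin (μ : ℝ)).toFinset, ∏ i, ‖a (v i)‖ ^ 2) :=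
            ENNReal.ofReal_le_ofReal hnormsq
        _ = ENNReal.ofReal C *
            ENNReal.ofReal (∑ v ∈ (hfin (μ : ℝ)).toFinset, ∏ i, ‖a (v i)‖ ^ 2) :=
            ENNReal.ofReal_mul hC0.le
        _ = ENNReal.ofReal C * ∑ v ∈ (hfin (μ : ℝ)).toFinset, g v := by
            congr 1
            rw [ENNReal.ofReal_sum_of_nonneg
              (fun v _ => Finset.prod_nonneg fun i _ => sq_nonneg _)]
            refine Finset.sum_congr rfl fun v _ => ?_
            rw [ENNReal.ofReal_prod_of_nonneg (fun i _ => sq_nonneg _)]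
            refine Finset.prod_congr rfl fun i _ => ?_
            rw [ENNReal.ofReal_pow (norm_nonneg _), ofReal_norm, enorm_eq_nnnorm]
    -- sum of fibers bound
    have hfibers : ∑' μ : {x : ℝ | ∃ v : Fin (m + 1) → ℕ, ∑ i, l (v i) = x},
        ∑ v ∈ (hfin (μ : ℝ)).toFinset, g v ≤ ∑' v : Fin (m + 1) → ℕ, g v := by
      have h1 : ∀ μ : {x : ℝ | ∃ v : Fin (m + 1) → ℕ, ∑ i, l (v i) = x},
          ∑ v ∈ (hfin (μ : ℝ)).toFinset, g v =
            ∑' v : Fin (m + 1) → ℕ,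
              Set.indicator {v : Fin (m + 1) → ℕ | ∑ i, l (v i) = (μ : ℝ)} g v := by
        intro μ
        conv_rhs => rw [← (hfin (μ : ℝ)).coe_toFinset]
        rw [← tsum_subtype (((hfin (μ : ℝ)).toFinset : Set (Fin (m + 1) → ℕ))) g,
          Finset.tsum_subtype']
      calc ∑' μ : {x : ℝ | ∃ v : Fin (m + 1) → ℕ, ∑ i, l (v i) = x},
            ∑ v ∈ (hfin (μ : ℝ)).toFinset, g v
          = ∑' (μ : {x : ℝ | ∃ v : Fin (m + 1) → ℕ, ∑ i, l (v i) = x})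
              (v : Fin (m + 1) → ℕ),
              Set.indicator {v : Fin (m + 1) → ℕ | ∑ i, l (v i) = (μ : ℝ)} g v :=
            tsum_congr h1
        _ = ∑' (v : Fin (m + 1) → ℕ) (μ : {x : ℝ | ∃ v : Fin (m + 1) → ℕ, ∑ i, l (v i) = x}),
              Set.indicator {v : Fin (m + 1) → ℕ | ∑ i, l (v i) = (μ : ℝ)} g v :=
            ENNReal.tsum_comm
        _ ≤ ∑' v : Fin (m + 1) → ℕ, g v := by
            refine ENNReal.tsum_le_tsum fun v => ?_
            set μ₀ : {x : ℝ | ∃ v : Fin (m + 1) → ℕ, ∑ i, l (v i) = x} :=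
              ⟨∑ i, l (v i), ⟨v, rfl⟩⟩ with hμ₀
            calc ∑' μ : {x : ℝ | ∃ v : Fin (m + 1) → ℕ, ∑ i, l (v i) = x},
                  Set.indicator {v : Fin (m + 1) → ℕ | ∑ i, l (v i) = (μ : ℝ)} g v
                ≤ ∑' μ : {x : ℝ | ∃ v : Fin (m + 1) → ℕ, ∑ i, l (v i) = x},
                    (if μ = μ₀ then g v else 0) := by
                  refine ENNReal.tsum_le_tsum fun μ => ?_
                  by_cases hv : v ∈ {v : Fin (m + 1) → ℕ | ∑ i, l (v i) = (μ : ℝ)}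
                  · have : μ = μ₀ := Subtype.ext (by rw [hμ₀]; exact hv.out.symm)
                    rw [Set.indicator_of_mem hv, if_pos this]
                  · rw [Set.indicator_of_notMem hv]
                    exact zero_le
              _ = g v := tsum_ite_eq μ₀ (fun _ => g v)
    -- summability of a
    have hsum : ∑' n, ((‖a n‖₊ : ℝ≥0∞)) ^ 2 ≠ ⊤ := by
      have h1 : Summable (fun n => (‖a n‖₊ ^ 2 : NNReal)) := by
        rw [← NNReal.summable_coe]
        simpa [NNReal.coe_pow, coe_nnnorm] using ha
      have := ENNReal.tsum_coe_ne_top_iff_summable.mpr h1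
      simpa [ENNReal.coe_pow] using this
    calc ∑' μ : {x : ℝ | ∃ v : Fin (m + 1) → ℕ, ∑ i, l (v i) = x},
        ((‖(Real.exp (-(μ : ℝ) * σ) : ℂ) *
            ∑ᶠ v ∈ {v : Fin (m + 1) → ℕ | ∑ i, l (v i) = (μ : ℝ)}, ∏ i, a (v i)‖₊ : ℝ≥0∞)) ^ 2
        ≤ ∑' μ : {x : ℝ | ∃ v : Fin (m + 1) → ℕ, ∑ i, l (v i) = x},
            ENNReal.ofReal C * ∑ v ∈ (hfin (μ : ℝ)).toFinset, g v :=
          ENNReal.tsum_le_tsum hterm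
      _ = ENNReal.ofReal C * ∑' μ : {x : ℝ | ∃ v : Fin (m + 1) → ℕ, ∑ i, l (v i) = x},
            ∑ v ∈ (hfin (μ : ℝ)).toFinset, g v := ENNReal.tsum_mul_left
      _ ≤ ENNReal.ofReal C * ∑' v : Fin (m + 1) → ℕ, g v :=
          mul_le_mul_right hfibers _
      _ = ENNReal.ofReal C * (∑' n, ((‖a n‖₊ : ℝ≥0∞)) ^ 2) ^ (m + 1) :=
          congrArg (ENNReal.ofReal C * ·)
            (tsum_pi_prod (fun n => ((‖a n‖₊ : ℝ≥0∞)) ^ 2) (m + 1))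
      _ < ⊤ := ENNReal.mul_lt_top ENNReal.ofReal_lt_top
          (ENNReal.pow_lt_top (lt_top_iff_ne_top.mpr hsum))
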